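/- (Lower bound in Theorem 3.) Fix M ≥ 3 and full-support probability distributions μ ≠ π on 𝒴. Then V*(M) ≥ LB(M), where V*(M) is the minimum of D(q_1‖μ) + D(q_2‖π) + … + D(q_M‖π) over all M-tuples of probability distributions (q_1,…,q_M) on 𝒴 satisfying Σ_{j≠1} D( q_j ‖ (Σ_{k≠1} q_k)/(M−1) ) ≥ Σ_{j≠2} D( q_j ‖ (Σ_{k≠2} q_k)/(M−1) ), and LB(M) is the minimum of 2·B(μ, q) over all probability distributions q on 𝒴 satisfying D(q‖π) ≤ (1/(M−1))·( 2·B(μ,π) + C_π ), with C_π ≜ −log( min_{y∈𝒴} π(y) ). -/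

import Mathlib

open Filter Finset Topology

noncomputable section

/-- `p` is a probability distribution on the finite alphabet. -/
def IsProb {𝓨 : Type} [Fintype 𝓨] (p : 𝓨 → ℝ) : Prop :=
  (∀ y, 0 ≤ p y) ∧ ∑ y, p y = 1

/-- `p` has full support. -/
def FullSupport {𝓨 : Type} (p : 𝓨 → ℝ) : Prop := ∀ y, 0 < p y

/-- Relative entropy `D(q‖p)` (natural log, convention `0·log 0 = 0`,
which holds since `Real.log 0 = 0` in Mathlib). -/
def KL {𝓨 : Type} [Fintype 𝓨] (q p : 𝓨 → ℝ) : ℝ :=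
  ∑ y, q y * Real.log (q y / p y)

/-- Bhattacharyya distance `B(p,q) = -log ∑ √(p y) √(q y)`. -/
def Bhat {𝓨 : Type} [Fintype 𝓨] (p q : 𝓨 → ℝ) : ℝ :=
  - Real.log (∑ y, Real.sqrt (p y) * Real.sqrt (q y))

/-- The feasible values of the optimization problem in Theorem 2: tuples
`(q_1, …, q_M)` of distributions (indexed here by `0, …, M-1`) satisfying
`∑_{j≠1} D(q_j ‖ (∑_{k≠1} q_k)/(M-1)) ≥ ∑_{j≠2} D(q_j ‖ (∑_{k≠2} q_k)/(M-1))`,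
with objective `D(q_1‖μ) + D(q_2‖π) + … + D(q_M‖π)`. -/
def VstarSet {𝓨 : Type} [Fintype 𝓨] (μ π : 𝓨 → ℝ) (M : ℕ) : Set ℝ :=
  {x | ∃ q : ℕ → 𝓨 → ℝ, (∀ j < M, IsProb (q j)) ∧
    (∑ j ∈ Finset.range M \ {0}, KL (q j)
        (fun a => (∑ k ∈ Finset.range M \ {0}, q k a) / ((M : ℝ) - 1)) ≥
     ∑ j ∈ Finset.range M \ {1}, KL (q j)
        (fun a => (∑ k ∈ Finset.range M \ {1}, q k a) / ((M : ℝ) - 1))) ∧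
    x = KL (q 0) μ + ∑ j ∈ Finset.range M \ {0}, KL (q j) π}

/-- Feasible values of the lower-bound optimization in Theorem 3:
`2·B(μ,q)` over distributions `q` with
`D(q‖π) ≤ (2B(μ,π) + C_π)/(M-1)`, where `C_π = -log min_y π(y)`. -/
def LBSet {𝓨 : Type} [Fintype 𝓨] (μ π : 𝓨 → ℝ) (M : ℕ) : Set ℝ :=
  {x | ∃ q : 𝓨 → ℝ, IsProb q ∧
    KL q π ≤ (1 / ((M : ℝ) - 1)) * (2 * Bhat μ π + (- Real.log (⨅ y, π y))) ∧
    x = 2 * Bhat μ q}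


namespace S10
variable {𝓨 : Type} [Fintype 𝓨]

lemma kl_split (q d : 𝓨 → ℝ) (hd : ∀ y, q y ≠ 0 → d y ≠ 0) :
    KL q d = ∑ y, q y * Real.log (q y) - ∑ y, q y * Real.log (d y) := by
  rw [KL, ← Finset.sum_sub_distrib]
  refine Finset.sum_congr rfl fun y _ => ?_
  by_cases h : q y = 0
  · simp [h]
  · rw [Real.log_div h (hd y h)]; ring

lemma gibbs (q b : 𝓨 → ℝ) (hq : ∀ y, 0 ≤ q y) (hb : ∀ y, 0 ≤ b y)
    (hsupp : ∀ y, q y ≠ 0 → b y ≠ 0) (hq1 : ∑ y, q y = 1) (hb1 : ∑ y, b y ≤ 1) :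
    0 ≤ KL q b := by
  have key : ∀ y, q y - b y ≤ q y * Real.log (q y / b y) := by
    intro y
    by_cases h : q y = 0
    · simpa [h] using hb y
    · have hqy : 0 < q y := (hq y).lt_of_ne (Ne.symm h)
      have hby : 0 < b y := (hb y).lt_of_ne (Ne.symm (hsupp y h))
      have h1 := Real.log_le_sub_one_of_pos (show 0 < b y / q y by positivity)
      have hlog : Real.log (b y / q y) = - Real.log (q y / b y) := by
        rw [← Real.log_inv]
        congr 1
        field_simp
      rw [hlog] at h1
      have h2 : q y * (b y / q y) = b y := by field_simp
      nlinarith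
  calc (0:ℝ) ≤ 1 - ∑ y, b y := by linarith
  _ = ∑ y, (q y - b y) := by rw [Finset.sum_sub_distrib, hq1]
  _ ≤ ∑ y, q y * Real.log (q y / b y) := Finset.sum_le_sum fun y _ => key y
  _ = KL q b := rfl

lemma kl_self (p : 𝓨 → ℝ) (hp : ∀ y, 0 < p y) : KL p p = 0 := by
  unfold KL
  refine Finset.sum_eq_zero fun y _ => ?_
  rw [div_self (hp y).ne']
  simp

/-- compensation identity -/
lemma kl_comp (J : Finset ℕ) (q : ℕ → 𝓨 → ℝ) (p : 𝓨 → ℝ) (c : ℝ) (hc : 0 < c)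
    (hq : ∀ j ∈ J, ∀ y, 0 ≤ q j y) (hp : ∀ y, 0 < p y) :
    ∑ j ∈ J, KL (q j) p
      = ∑ j ∈ J, KL (q j) (fun y => (∑ k ∈ J, q k y) / c)
        + c * KL (fun y => (∑ k ∈ J, q k y) / c) p := by
  have hS : ∀ j ∈ J, ∀ y, q j y ≠ 0 → (∑ k ∈ J, q k y) / c ≠ 0 := by
    intro j hj y hne
    have h1 : 0 < q j y := (hq j hj y).lt_of_ne (Ne.symm hne)
    have h2 : q j y ≤ ∑ k ∈ J, q k y := Finset.single_le_sum (fun k hk => hq k hk y) hj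
    exact (div_pos (lt_of_lt_of_le h1 h2) hc).ne'
  have e1 : ∀ j ∈ J, KL (q j) p = ∑ y, q j y * Real.log (q j y) - ∑ y, q j y * Real.log (p y) :=
    fun j _ => kl_split _ _ (fun y _ => (hp y).ne')
  have e2 : ∀ j ∈ J, KL (q j) (fun y => (∑ k ∈ J, q k y) / c)
      = ∑ y, q j y * Real.log (q j y) - ∑ y, q j y * Real.log ((∑ k ∈ J, q k y) / c) :=
    fun j hj => kl_split _ _ (hS j hj)
  have e3 : KL (fun y => (∑ k ∈ J, q k y) / c) p
      = ∑ y, ((∑ k ∈ J, q k y) / c) * Real.log ((∑ k ∈ J, q k y) / c)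
        - ∑ y, ((∑ k ∈ J, q k y) / c) * Real.log (p y) :=
    kl_split _ _ (fun y _ => (hp y).ne')
  rw [Finset.sum_congr rfl e1, Finset.sum_congr rfl e2, e3]
  have swap : ∀ g : 𝓨 → ℝ, ∑ j ∈ J, ∑ y, q j y * g y = ∑ y, (∑ k ∈ J, q k y) * g y := by
    intro g
    rw [Finset.sum_comm]
    exact Finset.sum_congr rfl fun y _ => by rw [Finset.sum_mul]
  simp only [Finset.sum_sub_distrib, swap]
  have hcan : ∀ y, c * ((∑ k ∈ J, q k y) / c) = (∑ k ∈ J, q k y) := fun y => by field_simp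
  rw [mul_sub, Finset.mul_sum, Finset.mul_sum]
  have h4 : ∀ y, c * ((∑ k ∈ J, q k y) / c * Real.log ((∑ k ∈ J, q k y) / c))
      = (∑ k ∈ J, q k y) * Real.log ((∑ k ∈ J, q k y) / c) := fun y => by
    rw [← mul_assoc, hcan y]
  have h5 : ∀ y, c * ((∑ k ∈ J, q k y) / c * Real.log (p y))
      = (∑ k ∈ J, q k y) * Real.log (p y) := fun y => by rw [← mul_assoc, hcan y]
  simp only [h4, h5]
  ring


lemma bhat_nonneg (p q : 𝓨 → ℝ) (hp : IsProb p) (hq : IsProb q) : 0 ≤ Bhat p q := by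
  unfold Bhat
  have h1 : ∑ y, Real.sqrt (p y) * Real.sqrt (q y) ≤ 1 := by
    calc ∑ y, Real.sqrt (p y) * Real.sqrt (q y) ≤ ∑ y, (p y + q y) / 2 := by
          refine Finset.sum_le_sum fun y _ => ?_
          nlinarith [sq_nonneg (Real.sqrt (p y) - Real.sqrt (q y)),
            Real.sq_sqrt (hp.1 y), Real.sq_sqrt (hq.1 y)]
    _ = 1 := by
          rw [← Finset.sum_div, Finset.sum_add_distrib, hp.2, hq.2]; norm_num
  have h0 : 0 ≤ ∑ y, Real.sqrt (p y) * Real.sqrt (q y) :=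
    Finset.sum_nonneg fun y _ => mul_nonneg (Real.sqrt_nonneg _) (Real.sqrt_nonneg _)
  linarith [Real.log_nonpos h0 h1]

lemma Zpos (μ r : 𝓨 → ℝ) (hμf : ∀ y, 0 < μ y) (hr : ∀ y, 0 ≤ r y) (hr1 : ∑ y, r y = 1) :
    0 < ∑ y, Real.sqrt (μ y) * Real.sqrt (r y) := by
  have hy : ∃ y ∈ Finset.univ (α := 𝓨), 0 < r y := by
    by_contra h
    push_neg at h
    have : ∑ y, r y = 0 := Finset.sum_eq_zero fun y hy => le_antisymm (h y hy) (hr y)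
    rw [hr1] at this; norm_num at this
  obtain ⟨y0, _, hy0⟩ := hy
  refine Finset.sum_pos' (fun y _ => mul_nonneg (Real.sqrt_nonneg _) (Real.sqrt_nonneg _))
    ⟨y0, Finset.mem_univ _, ?_⟩
  exact mul_pos (Real.sqrt_pos.mpr (hμf y0)) (Real.sqrt_pos.mpr hy0)

lemma two_bhat_le (μ q r : 𝓨 → ℝ) (hμ : IsProb μ) (hμf : ∀ y, 0 < μ y)
    (hq : IsProb q) (hr : ∀ y, 0 ≤ r y) (hr1 : ∑ y, r y = 1)
    (hsupp : ∀ y, q y ≠ 0 → r y ≠ 0) :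
    2 * Bhat μ r ≤ KL q μ + KL q r := by
  set Z := ∑ y, Real.sqrt (μ y) * Real.sqrt (r y) with hZ
  have hZpos : 0 < Z := Zpos μ r hμf hr hr1
  set b : 𝓨 → ℝ := fun y => Real.sqrt (μ y) * Real.sqrt (r y) / Z with hb
  have hbnn : ∀ y, 0 ≤ b y := fun y =>
    div_nonneg (mul_nonneg (Real.sqrt_nonneg _) (Real.sqrt_nonneg _)) hZpos.le
  have hb1 : ∑ y, b y = 1 := by
    rw [hb, ← Finset.sum_div, div_self hZpos.ne']
  have hbsupp : ∀ y, q y ≠ 0 → b y ≠ 0 := by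
    intro y hne
    have hry : 0 < r y := (hr y).lt_of_ne (Ne.symm (hsupp y hne))
    have : 0 < b y :=
      div_pos (mul_pos (Real.sqrt_pos.mpr (hμf y)) (Real.sqrt_pos.mpr hry)) hZpos
    exact this.ne'
  have key : KL q μ + KL q r = 2 * KL q b + 2 * Bhat μ r := by
    unfold KL
    have per : ∀ y, q y * Real.log (q y / μ y) + q y * Real.log (q y / r y)
        = 2 * (q y * Real.log (q y / b y)) + 2 * (q y * (- Real.log Z)) := by
      intro y
      by_cases h : q y = 0
      · simp [h]
      · have hqy : q y ≠ 0 := h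
        have hry : 0 < r y := (hr y).lt_of_ne (Ne.symm (hsupp y h))
        have hμy := hμf y
        have hby : (0:ℝ) < b y :=
          div_pos (mul_pos (Real.sqrt_pos.mpr hμy) (Real.sqrt_pos.mpr hry)) hZpos
        rw [Real.log_div hqy hμy.ne', Real.log_div hqy hry.ne',
          Real.log_div hqy hby.ne', hb]
        rw [Real.log_div (mul_pos (Real.sqrt_pos.mpr hμy) (Real.sqrt_pos.mpr hry)).ne' hZpos.ne',
          Real.log_mul (Real.sqrt_pos.mpr hμy).ne' (Real.sqrt_pos.mpr hry).ne',
          Real.log_sqrt hμy.le, Real.log_sqrt hry.le]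
        ring
    rw [← Finset.sum_add_distrib, Finset.sum_congr rfl (fun y _ => per y),
      Finset.sum_add_distrib, ← Finset.mul_sum, ← Finset.mul_sum]
    have hs : ∑ i, q i * (- Real.log Z) = - Real.log Z := by
      rw [← Finset.sum_mul, hq.2, one_mul]
    rw [hs]
    unfold Bhat
    rw [← hZ]
  have hklqb : 0 ≤ KL q b := gibbs q b hq.1 hbnn hbsupp hq.2 hb1.le
  linarith

lemma kl_le_C [Nonempty 𝓨] (q π : 𝓨 → ℝ) (hq : IsProb q) (hπf : ∀ y, 0 < π y) :
    KL q π ≤ - Real.log (⨅ y, π y) := by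
  set C := - Real.log (⨅ y, π y) with hC
  have hinf_le : ∀ y, (⨅ y, π y) ≤ π y := fun y =>
    ciInf_le (Finite.bddBelow_range _) y
  have hinf_pos : 0 < ⨅ y, π y := by
    obtain ⟨y0, hy0⟩ := exists_eq_ciInf_of_finite (f := π)
    rw [← hy0]; exact hπf y0
  have per : ∀ y, q y * Real.log (q y / π y) ≤ q y * C := by
    intro y
    by_cases h : q y = 0
    · simp [h]
    · have hqy : 0 < q y := (hq.1 y).lt_of_ne (Ne.symm h)
      have hqle1 : q y ≤ 1 := by
        rw [← hq.2]
        exact Finset.single_le_sum (fun z _ => hq.1 z) (Finset.mem_univ y)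
      have hlog : Real.log (q y / π y) ≤ C := by
        rw [Real.log_div h (hπf y).ne', hC]
        have h1 : Real.log (q y) ≤ 0 := Real.log_nonpos hqy.le hqle1
        have h2 : Real.log (⨅ y, π y) ≤ Real.log (π y) :=
          Real.log_le_log hinf_pos (hinf_le y)
        linarith
      exact mul_le_mul_of_nonneg_left hlog hqy.le
  calc KL q π ≤ ∑ y, q y * C := Finset.sum_le_sum fun y _ => per y
  _ = C := by rw [← Finset.sum_mul, hq.2, one_mul]

lemma C_nonneg [Nonempty 𝓨] (π : 𝓨 → ℝ) (hπ : IsProb π) (hπf : ∀ y, 0 < π y) :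
    0 ≤ - Real.log (⨅ y, π y) := by
  have hinf_pos : 0 < ⨅ y, π y := by
    obtain ⟨y0, hy0⟩ := exists_eq_ciInf_of_finite (f := π)
    rw [← hy0]; exact hπf y0
  have hle1 : (⨅ y, π y) ≤ 1 := by
    obtain ⟨y0, hy0⟩ := exists_eq_ciInf_of_finite (f := π)
    rw [← hy0]
    calc π y0 ≤ ∑ y, π y := Finset.single_le_sum (fun z _ => hπ.1 z) (Finset.mem_univ y0)
    _ = 1 := hπ.2
  linarith [Real.log_nonpos hinf_pos.le hle1]


/-- `t ↦ t log (t/c)` equals `t log t - t log c` for every real `t`, provided `c ≠ 0`. -/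
lemma mul_log_div (t c : ℝ) (hc : c ≠ 0) :
    t * Real.log (t / c) = t * Real.log t - t * Real.log c := by
  by_cases h : t = 0
  · simp [h]
  · rw [Real.log_div h hc]; ring

lemma isClosed_isProb : IsClosed {q : 𝓨 → ℝ | IsProb q} := by
  have h1 : {q : 𝓨 → ℝ | IsProb q}
      = (⋂ y, {q : 𝓨 → ℝ | 0 ≤ q y}) ∩ {q | ∑ y, q y = 1} := by
    ext q
    simp [IsProb, Set.mem_iInter]
  rw [h1]
  refine IsClosed.inter (isClosed_iInter fun y => ?_) ?_
  · exact isClosed_le continuous_const (continuous_apply y)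
  · exact isClosed_eq (continuous_finset_sum _ fun y _ => continuous_apply y) continuous_const

lemma continuous_klpi (π : 𝓨 → ℝ) (hπf : ∀ y, 0 < π y) :
    Continuous fun q : 𝓨 → ℝ => KL q π := by
  have h : (fun q : 𝓨 → ℝ => KL q π)
      = fun q => ∑ y, (q y * Real.log (q y) - q y * Real.log (π y)) := by
    funext q
    rw [KL]
    exact Finset.sum_congr rfl fun y _ => mul_log_div _ _ (hπf y).ne'
  rw [h]
  refine continuous_finset_sum _ fun y _ => Continuous.sub ?_ ?_
  · exact Real.continuous_mul_log.comp (continuous_apply y)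
  · exact (continuous_apply y).mul continuous_const

lemma exists_L [Nonempty 𝓨] (M : ℕ) (hM : 3 ≤ M) (μ π : 𝓨 → ℝ)
    (hμ : IsProb μ) (hπ : IsProb π) (hμf : ∀ y, 0 < μ y) (hπf : ∀ y, 0 < π y) :
    ∃ L, IsLeast (LBSet μ π M) L := by
  set c : ℝ := (1 / ((M : ℝ) - 1)) * (2 * Bhat μ π + (- Real.log (⨅ y, π y))) with hc
  set D : Set (𝓨 → ℝ) := {q | IsProb q ∧ KL q π ≤ c} with hD
  have hDclosed : IsClosed D := by
    have : D = {q : 𝓨 → ℝ | IsProb q} ∩ {q | KL q π ≤ c} := rfl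
    rw [this]
    exact isClosed_isProb.inter (isClosed_le (continuous_klpi π hπf) continuous_const)
  have hDsub : D ⊆ Set.univ.pi fun _ : 𝓨 => Set.Icc (0:ℝ) 1 := by
    intro q hq y _
    refine ⟨hq.1.1 y, ?_⟩
    rw [← hq.1.2]
    exact Finset.single_le_sum (fun z _ => hq.1.1 z) (Finset.mem_univ y)
  have hDcomp : IsCompact D :=
    IsCompact.of_isClosed_subset (isCompact_univ_pi fun _ => isCompact_Icc) hDclosed hDsub
  have hDne : D.Nonempty := by
    refine ⟨π, hπ, ?_⟩
    rw [kl_self π hπf, hc]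
    have h1 := bhat_nonneg μ π hμ hπ
    have h2 := C_nonneg π hπ hπf
    have h3 : (0:ℝ) < (M:ℝ) - 1 := by
      have : (3:ℝ) ≤ (M:ℝ) := by exact_mod_cast hM
      linarith
    positivity
  have hcont : ContinuousOn (fun q : 𝓨 → ℝ => 2 * Bhat μ q) D := by
    have hg : Continuous fun q : 𝓨 → ℝ => ∑ y, Real.sqrt (μ y) * Real.sqrt (q y) :=
      continuous_finset_sum _ fun y _ =>
        (continuous_const.mul (Real.continuous_sqrt.comp (continuous_apply y)))
    have hlog : ContinuousOn (fun q : 𝓨 → ℝ =>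
        Real.log (∑ y, Real.sqrt (μ y) * Real.sqrt (q y))) D := by
      refine Real.continuousOn_log.comp hg.continuousOn ?_
      intro q hq
      exact (Zpos μ q hμf hq.1.1 hq.1.2).ne'
    exact (continuous_const.continuousOn.mul hlog.neg)
  obtain ⟨q0, hq0D, hq0min⟩ := hDcomp.exists_isMinOn hDne hcont
  refine ⟨2 * Bhat μ q0, ⟨q0, hq0D.1, hq0D.2, rfl⟩, ?_⟩
  rintro x ⟨q, hq1, hq2, rfl⟩
  exact hq0min (show q ∈ D from ⟨hq1, hq2⟩)

/-- entropy-type sum -/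
def Hfun {𝓨 : Type} [Fintype 𝓨] (p : 𝓨 → ℝ) : ℝ := ∑ y, p y * Real.log (p y)

lemma kl_sum_rewrite (J : Finset ℕ) (q : ℕ → 𝓨 → ℝ) (c : ℝ) (hc : 0 < c)
    (hq : ∀ j ∈ J, ∀ y, 0 ≤ q j y) :
    ∑ j ∈ J, KL (q j) (fun a => (∑ k ∈ J, q k a) / c)
      = ∑ j ∈ J, Hfun (q j) - ∑ y, ((∑ k ∈ J, q k y) * Real.log (∑ k ∈ J, q k y)
          - (∑ k ∈ J, q k y) * Real.log c) := by
  have hS : ∀ j ∈ J, ∀ y, q j y ≠ 0 → (∑ k ∈ J, q k y) / c ≠ 0 := by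
    intro j hj y hne
    have h1 : 0 < q j y := (hq j hj y).lt_of_ne (Ne.symm hne)
    have h2 : q j y ≤ ∑ k ∈ J, q k y := Finset.single_le_sum (fun k hk => hq k hk y) hj
    exact (div_pos (lt_of_lt_of_le h1 h2) hc).ne'
  have e2 : ∀ j ∈ J, KL (q j) (fun y => (∑ k ∈ J, q k y) / c)
      = Hfun (q j) - ∑ y, q j y * Real.log ((∑ k ∈ J, q k y) / c) :=
    fun j hj => kl_split _ _ (hS j hj)
  rw [Finset.sum_congr rfl e2, Finset.sum_sub_distrib]
  congr 1
  rw [Finset.sum_comm]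
  refine Finset.sum_congr rfl fun y _ => ?_
  rw [← Finset.sum_mul, mul_log_div _ _ hc.ne']

/-- objective rewritten in globally continuous form -/
lemma phi_eq (μ π : 𝓨 → ℝ) (hμf : ∀ y, 0 < μ y) (hπf : ∀ y, 0 < π y) (M : ℕ)
    (r : ℕ → 𝓨 → ℝ) :
    KL (r 0) μ + ∑ j ∈ Finset.range M \ {0}, KL (r j) π
      = (Hfun (r 0) - ∑ y, r 0 y * Real.log (μ y))
        + ∑ j ∈ Finset.range M \ {0}, (Hfun (r j) - ∑ y, r j y * Real.log (π y)) := by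
  rw [kl_split _ _ (fun y _ => (hμf y).ne')]
  congr 1
  exact Finset.sum_congr rfl fun j _ => kl_split _ _ (fun y _ => (hπf y).ne')

lemma exists_V [Nonempty 𝓨] (M : ℕ) (hM : 3 ≤ M) (μ π : 𝓨 → ℝ)
    (hμ : IsProb μ) (hπ : IsProb π) (hμf : ∀ y, 0 < μ y) (hπf : ∀ y, 0 < π y) :
    ∃ V, IsLeast (VstarSet μ π M) V := by
  set cM : ℝ := (M : ℝ) - 1 with hcM
  have hcMpos : (0:ℝ) < cM := by
    have : (3:ℝ) ≤ (M:ℝ) := by exact_mod_cast hM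
    rw [hcM]; linarith
  set A : Finset ℕ := Finset.range M \ {0} with hA
  set B : Finset ℕ := Finset.range M \ {1} with hB
  -- the continuous surrogate for each side of the constraint
  set F : Finset ℕ → (ℕ → 𝓨 → ℝ) → ℝ := fun J r =>
    ∑ j ∈ J, Hfun (r j) - ∑ y, ((∑ k ∈ J, r k y) * Real.log (∑ k ∈ J, r k y)
      - (∑ k ∈ J, r k y) * Real.log cM) with hF
  have hFcont : ∀ J : Finset ℕ, Continuous (F J) := by
    intro J
    refine Continuous.sub ?_ ?_
    · refine continuous_finset_sum _ fun j _ => ?_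
      refine continuous_finset_sum _ fun y _ => ?_
      exact Real.continuous_mul_log.comp ((continuous_apply y).comp (continuous_apply j))
    · refine continuous_finset_sum _ fun y _ => ?_
      have hS : Continuous fun r : ℕ → 𝓨 → ℝ => ∑ k ∈ J, r k y :=
        continuous_finset_sum _ fun k _ => (continuous_apply y).comp (continuous_apply k)
      exact (Real.continuous_mul_log.comp hS).sub (hS.mul continuous_const)
  set g : (ℕ → 𝓨 → ℝ) → ℝ := fun r => F A r - F B r with hg
  have hgcont : Continuous g := (hFcont A).sub (hFcont B)
  -- the objective, continuous version
  set Φ : (ℕ → 𝓨 → ℝ) → ℝ := fun r =>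
    (Hfun (r 0) - ∑ y, r 0 y * Real.log (μ y))
      + ∑ j ∈ A, (Hfun (r j) - ∑ y, r j y * Real.log (π y)) with hΦ
  have hΦcont : Continuous Φ := by
    refine Continuous.add ?_ ?_
    · refine Continuous.sub ?_ ?_
      · exact continuous_finset_sum _ fun y _ =>
          Real.continuous_mul_log.comp ((continuous_apply y).comp (continuous_apply 0))
      · exact continuous_finset_sum _ fun y _ =>
          ((((continuous_apply y).comp (continuous_apply 0) :
            Continuous fun r : ℕ → 𝓨 → ℝ => r 0 y)).mul continuous_const)
    · refine continuous_finset_sum _ fun j _ => Continuous.sub ?_ ?_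
      · exact continuous_finset_sum _ fun y _ =>
          Real.continuous_mul_log.comp ((continuous_apply y).comp (continuous_apply j))
      · exact continuous_finset_sum _ fun y _ =>
          ((((continuous_apply y).comp (continuous_apply j) :
            Continuous fun r : ℕ → 𝓨 → ℝ => r j y)).mul continuous_const)
  -- the feasible region
  set K : Set (ℕ → 𝓨 → ℝ) := {r | (∀ j, ∀ y, r j y ∈ Set.Icc (0:ℝ) 1) ∧
    (∀ j < M, IsProb (r j)) ∧ 0 ≤ g r} with hK
  have hKclosed : IsClosed K := by
    have h1 : IsClosed {r : ℕ → 𝓨 → ℝ | ∀ j, ∀ y, r j y ∈ Set.Icc (0:ℝ) 1} := by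
      have : {r : ℕ → 𝓨 → ℝ | ∀ j, ∀ y, r j y ∈ Set.Icc (0:ℝ) 1}
          = ⋂ j, ⋂ y, {r : ℕ → 𝓨 → ℝ | r j y ∈ Set.Icc (0:ℝ) 1} := by
        ext r; simp [Set.mem_iInter]
      rw [this]
      refine isClosed_iInter fun j => isClosed_iInter fun y => ?_
      exact IsClosed.preimage ((continuous_apply y).comp (continuous_apply j)) isClosed_Icc
    have h2 : IsClosed {r : ℕ → 𝓨 → ℝ | ∀ j < M, IsProb (r j)} := by
      have : {r : ℕ → 𝓨 → ℝ | ∀ j < M, IsProb (r j)}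
          = ⋂ j, ⋂ (_ : j < M), (fun r : ℕ → 𝓨 → ℝ => r j) ⁻¹' {p | IsProb p} := by
        ext r; simp [Set.mem_iInter]
      rw [this]
      exact isClosed_iInter fun j => isClosed_iInter fun _ =>
        IsClosed.preimage (continuous_apply j) isClosed_isProb
    have h3 : IsClosed {r : ℕ → 𝓨 → ℝ | 0 ≤ g r} := isClosed_le continuous_const hgcont
    have : K = {r : ℕ → 𝓨 → ℝ | ∀ j, ∀ y, r j y ∈ Set.Icc (0:ℝ) 1}
        ∩ ({r | ∀ j < M, IsProb (r j)} ∩ {r | 0 ≤ g r}) := by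
      ext r; simp only [hK, Set.mem_setOf_eq, Set.mem_inter_iff]
    rw [this]
    exact h1.inter (h2.inter h3)
  have hKcomp : IsCompact K := by
    have hbig : IsCompact (Set.univ.pi fun _ : ℕ => Set.univ.pi fun _ : 𝓨 => Set.Icc (0:ℝ) 1) :=
      isCompact_univ_pi fun _ => isCompact_univ_pi fun _ => isCompact_Icc
    refine IsCompact.of_isClosed_subset hbig hKclosed ?_
    intro r hr
    rw [Set.mem_univ_pi]
    intro j
    rw [Set.mem_univ_pi]
    intro y
    exact hr.1 j y
  -- K is nonempty : all components π
  have hπle1 : ∀ y, π y ≤ 1 := by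
    intro y
    rw [← hπ.2]
    exact Finset.single_le_sum (fun z _ => hπ.1 z) (Finset.mem_univ y)
  have hcardAB : A.card = B.card := by
    rw [hA, hB, Finset.card_sdiff_of_subset (by simp; omega), Finset.card_sdiff_of_subset (by simp; omega)]
    simp
  have hKne : K.Nonempty := by
    refine ⟨fun _ => π, fun j y => ⟨hπ.1 y, hπle1 y⟩, fun j _ => hπ, ?_⟩
    have hFJ : ∀ J : Finset ℕ, F J (fun _ => π)
        = J.card • Hfun π - ∑ y, ((J.card • π y) * Real.log (J.card • π y)
            - (J.card • π y) * Real.log cM) := by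
      intro J
      rw [hF]
      simp only [Finset.sum_const]
    have heq : F A (fun _ => π) = F B (fun _ => π) := by rw [hFJ A, hFJ B, hcardAB]
    show 0 ≤ F A (fun _ => π) - F B (fun _ => π)
    simp [heq]
  obtain ⟨rstar, hrK, hrmin⟩ := hKcomp.exists_isMinOn hKne hΦcont.continuousOn
  -- relating things
  have hconstraint_iff : ∀ r : ℕ → 𝓨 → ℝ, (∀ j < M, ∀ y, 0 ≤ r j y) →
      ((∑ j ∈ A, KL (r j) (fun a => (∑ k ∈ A, r k a) / cM) ≥
        ∑ j ∈ B, KL (r j) (fun a => (∑ k ∈ B, r k a) / cM)) ↔ 0 ≤ g r) := by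
    intro r hnn
    have hnnA : ∀ j ∈ A, ∀ y, 0 ≤ r j y := fun j hj y =>
      hnn j (Finset.mem_range.mp (Finset.mem_sdiff.mp hj).1) y
    have hnnB : ∀ j ∈ B, ∀ y, 0 ≤ r j y := fun j hj y =>
      hnn j (Finset.mem_range.mp (Finset.mem_sdiff.mp hj).1) y
    rw [kl_sum_rewrite A r cM hcMpos hnnA, kl_sum_rewrite B r cM hcMpos hnnB]
    rw [hg, hF]
    constructor <;> intro h <;> simp only [ge_iff_le] at h ⊢ <;> linarith
  have hobj : ∀ r : ℕ → 𝓨 → ℝ, KL (r 0) μ + ∑ j ∈ A, KL (r j) π = Φ r := by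
    intro r
    rw [hΦ, hA]
    exact phi_eq μ π hμf hπf M r
  refine ⟨Φ rstar, ⟨rstar, ?_, ?_, ?_⟩, ?_⟩
  · exact hrK.2.1
  · rw [← hA, ← hB, ← hcM]
    exact (hconstraint_iff rstar (fun j hj y => (hrK.2.1 j hj).1 y)).mpr hrK.2.2
  · rw [← hA, hobj rstar]
  · rintro x ⟨q, hq1, hq2, hq3⟩
    -- truncate q
    set q' : ℕ → 𝓨 → ℝ := fun j => if j < M then q j else fun _ => 0 with hq'
    have hag : ∀ j < M, q j = q' j := by
      intro j hj
      rw [hq']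
      simp [hj]
    have hagJ : ∀ J : Finset ℕ, J ⊆ Finset.range M → ∀ p : 𝓨 → ℝ,
        ∑ j ∈ J, KL (q j) p = ∑ j ∈ J, KL (q' j) p := by
      intro J hJ p
      exact Finset.sum_congr rfl fun j hj => by
        rw [hag j (Finset.mem_range.mp (hJ hj))]
    have hsum_eq : ∀ J : Finset ℕ, J ⊆ Finset.range M → ∀ a,
        (∑ k ∈ J, q k a) = (∑ k ∈ J, q' k a) :=
      fun J hJ a => Finset.sum_congr rfl fun k hk => by
        rw [hag k (Finset.mem_range.mp (hJ hk))]
    have hklJ : ∀ J : Finset ℕ, J ⊆ Finset.range M →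
        ∑ j ∈ J, KL (q j) (fun a => (∑ k ∈ J, q k a) / cM)
          = ∑ j ∈ J, KL (q' j) (fun a => (∑ k ∈ J, q' k a) / cM) := by
      intro J hJ
      refine Finset.sum_congr rfl fun j hj => ?_
      rw [hag j (Finset.mem_range.mp (hJ hj))]
      congr 1
      funext a
      rw [hsum_eq J hJ a]
    have hAsub : A ⊆ Finset.range M := by rw [hA]; exact Finset.sdiff_subset
    have hBsub : B ⊆ Finset.range M := by rw [hB]; exact Finset.sdiff_subset
    have hq'K : q' ∈ K := by
      refine ⟨?_, ?_, ?_⟩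
      · intro j y
        rw [hq']
        by_cases hj : j < M
        · simp only [hj, if_true]
          have := hq1 j hj
          refine ⟨this.1 y, ?_⟩
          rw [← this.2]
          exact Finset.single_le_sum (fun z _ => this.1 z) (Finset.mem_univ y)
        · simp [hj]
      · intro j hj
        rw [← hag j hj]
        exact hq1 j hj
      · refine (hconstraint_iff q' ?_).mp ?_
        · intro j hj y
          rw [← hag j hj]
          exact (hq1 j hj).1 y
        · rw [← hklJ A hAsub, ← hklJ B hBsub]
          rw [hA, hB, hcM]
          exact hq2
    have : Φ rstar ≤ Φ q' := hrmin hq'K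
    have hxq' : x = Φ q' := by
      rw [hq3, ← hobj q', ← hA]
      rw [hag 0 (by omega)]
      rw [hagJ A hAsub π]
    rw [hxq']
    exact this

lemma main_ineq [Nonempty 𝓨] (M : ℕ) (hM : 3 ≤ M) (μ π : 𝓨 → ℝ)
    (hμ : IsProb μ) (hπ : IsProb π) (hμf : FullSupport μ) (hπf : FullSupport π)
    (L : ℝ) (hL : IsLeast (LBSet μ π M) L) :
    ∀ x ∈ VstarSet μ π M, L ≤ x := by
  intro x hx
  obtain ⟨q, hprob, hcon, hxeq⟩ := hx
  set cM : ℝ := (M : ℝ) - 1 with hcM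
  have hcMpos : (0:ℝ) < cM := by
    rw [hcM]
    have : (3:ℝ) ≤ (M:ℝ) := by exact_mod_cast hM
    linarith
  set A : Finset ℕ := Finset.range M \ {0} with hA
  set B : Finset ℕ := Finset.range M \ {1} with hB
  have hmemA : ∀ j ∈ A, j < M := fun j hj => Finset.mem_range.mp (Finset.mem_sdiff.mp hj).1
  have hmemB : ∀ j ∈ B, j < M := fun j hj => Finset.mem_range.mp (Finset.mem_sdiff.mp hj).1
  have hprobA : ∀ j ∈ A, IsProb (q j) := fun j hj => hprob j (hmemA j hj)
  have hprobB : ∀ j ∈ B, IsProb (q j) := fun j hj => hprob j (hmemB j hj)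
  have h0B : (0:ℕ) ∈ B := by
    rw [hB]
    simp [Finset.mem_sdiff]
    omega
  have hprob0 : IsProb (q 0) := hprob 0 (by omega)
  have hcardA : (A.card : ℝ) = cM := by
    rw [hA, Finset.card_sdiff_of_subset (by simp; omega)]
    simp
    rw [hcM]
    have h1 : 1 ≤ M := by omega
    push_cast [Nat.cast_sub h1]
    ring
  have hcardB : (B.card : ℝ) = cM := by
    rw [hB, Finset.card_sdiff_of_subset (by simp; omega)]
    simp
    rw [hcM]
    have h1 : 1 ≤ M := by omega
    push_cast [Nat.cast_sub h1]
    ring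
  -- the averaged distributions
  set rA : 𝓨 → ℝ := fun y => (∑ k ∈ A, q k y) / cM with hrA
  set rB : 𝓨 → ℝ := fun y => (∑ k ∈ B, q k y) / cM with hrB
  have hqnnA : ∀ j ∈ A, ∀ y, 0 ≤ q j y := fun j hj y => (hprobA j hj).1 y
  have hqnnB : ∀ j ∈ B, ∀ y, 0 ≤ q j y := fun j hj y => (hprobB j hj).1 y
  have havg : ∀ (J : Finset ℕ), (∀ j ∈ J, IsProb (q j)) → (J.card : ℝ) = cM →
      (∀ y, 0 ≤ (∑ k ∈ J, q k y) / cM) ∧ ∑ y, (∑ k ∈ J, q k y) / cM = 1 := by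
    intro J hJ hcard
    constructor
    · intro y
      exact div_nonneg (Finset.sum_nonneg fun k hk => (hJ k hk).1 y) hcMpos.le
    · rw [← Finset.sum_div, Finset.sum_comm]
      rw [Finset.sum_congr rfl (fun k hk => (hJ k hk).2), Finset.sum_const, nsmul_eq_mul,
        mul_one, hcard, div_self hcMpos.ne']
  obtain ⟨hrAnn, hrA1⟩ := havg A hprobA hcardA
  obtain ⟨hrBnn, hrB1⟩ := havg B hprobB hcardB
  have hsuppB : ∀ j ∈ B, ∀ y, q j y ≠ 0 → rB y ≠ 0 := by
    intro j hj y hne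
    have h1 : 0 < q j y := ((hprobB j hj).1 y).lt_of_ne (Ne.symm hne)
    have h2 : q j y ≤ ∑ k ∈ B, q k y := Finset.single_le_sum (fun k hk => hqnnB k hk y) hj
    exact (div_pos (lt_of_lt_of_le h1 h2) hcMpos).ne'
  have hsuppA : ∀ j ∈ A, ∀ y, q j y ≠ 0 → rA y ≠ 0 := by
    intro j hj y hne
    have h1 : 0 < q j y := ((hprobA j hj).1 y).lt_of_ne (Ne.symm hne)
    have h2 : q j y ≤ ∑ k ∈ A, q k y := Finset.single_le_sum (fun k hk => hqnnA k hk y) hj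
    exact (div_pos (lt_of_lt_of_le h1 h2) hcMpos).ne'
  have hklq0μ : 0 ≤ KL (q 0) μ :=
    gibbs _ _ hprob0.1 (fun y => (hμf y).le) (fun y _ => (hμf y).ne') hprob0.2 hμ.2.le
  have hklπ : ∀ j ∈ A, 0 ≤ KL (q j) π := fun j hj =>
    gibbs _ _ (hprobA j hj).1 (fun y => (hπf y).le) (fun y _ => (hπf y).ne')
      (hprobA j hj).2 hπ.2.le
  have hsumAπ : ∑ j ∈ A, KL (q j) π ≤ x := by
    rw [hxeq]; linarith
  -- case split
  by_cases hcase : 2 * Bhat μ π ≤ x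
  · -- π itself is feasible for LBSet
    have hπmem : 2 * Bhat μ π ∈ LBSet μ π M := by
      refine ⟨π, hπ, ?_, rfl⟩
      rw [kl_self π hπf]
      have h1 := bhat_nonneg μ π hμ hπ
      have h2 := C_nonneg π hπ hπf
      positivity
    exact le_trans (hL.2 hπmem) hcase
  · push_neg at hcase
    -- rB is feasible
    have hcompB := kl_comp B q π cM hcMpos hqnnB hπf
    have hcompA := kl_comp A q π cM hcMpos hqnnA hπf
    have hklBnn : ∀ j ∈ B, 0 ≤ KL (q j) rB := fun j hj =>
      gibbs _ _ (hprobB j hj).1 hrBnn (hsuppB j hj) (hprobB j hj).2 hrB1.le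
    have hklAnn : ∀ j ∈ A, 0 ≤ KL (q j) rA := fun j hj =>
      gibbs _ _ (hprobA j hj).1 hrAnn (hsuppA j hj) (hprobA j hj).2 hrA1.le
    have hrBprob : IsProb rB := ⟨hrBnn, hrB1⟩
    have hrAprob : IsProb rA := ⟨hrAnn, hrA1⟩
    -- bound on KL rB π
    have hsum_nnB : 0 ≤ ∑ j ∈ B, KL (q j) rB := Finset.sum_nonneg hklBnn
    have hBsub : B \ {0} ⊆ A := by
      rw [hA, hB]
      intro j hj
      simp [Finset.mem_sdiff] at hj ⊢
      omega
    have hsumBπ : ∑ j ∈ B, KL (q j) π ≤ (- Real.log (⨅ y, π y)) + x := by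
      have hsplit : ∑ j ∈ B, KL (q j) π = KL (q 0) π + ∑ j ∈ B \ {0}, KL (q j) π := by
        rw [Finset.sum_eq_sum_sdiff_singleton_add h0B]
        ring
      have h1 : KL (q 0) π ≤ - Real.log (⨅ y, π y) := kl_le_C _ _ hprob0 hπf
      have h2 : ∑ j ∈ B \ {0}, KL (q j) π ≤ ∑ j ∈ A, KL (q j) π :=
        Finset.sum_le_sum_of_subset_of_nonneg hBsub (fun j hj _ => hklπ j hj)
      linarith
    have hklrBπ : KL rB π ≤ (1 / cM) * (2 * Bhat μ π + (- Real.log (⨅ y, π y))) := by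
      have h3 : cM * KL rB π ≤ ∑ j ∈ B, KL (q j) π := by
        rw [hrB]; rw [hrB] at hsum_nnB; linarith [hcompB, hsum_nnB]
      have h4 : cM * KL rB π ≤ 2 * Bhat μ π + (- Real.log (⨅ y, π y)) := by
        have := hsumBπ
        linarith
      rw [div_mul_eq_mul_div, one_mul, le_div_iff₀ hcMpos]
      linarith
    have hrBmem : 2 * Bhat μ rB ∈ LBSet μ π M := ⟨rB, hrBprob, hklrBπ, rfl⟩
    have hLle : L ≤ 2 * Bhat μ rB := hL.2 hrBmem
    -- now 2 * Bhat μ rB ≤ x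
    have hb1 : 2 * Bhat μ rB ≤ KL (q 0) μ + KL (q 0) rB :=
      two_bhat_le μ (q 0) rB hμ hμf hprob0 hrBnn hrB1 (hsuppB 0 h0B)
    have hb2 : KL (q 0) rB ≤ ∑ j ∈ B, KL (q j) rB := by
      have := Finset.single_le_sum hklBnn h0B
      exact this
    have hb3 : ∑ j ∈ A, KL (q j) rA ≤ ∑ j ∈ A, KL (q j) π := by
      have hnn : 0 ≤ KL rA π :=
        gibbs _ _ hrAnn (fun y => (hπf y).le) (fun y _ => (hπf y).ne') hrA1 hπ.2.le
      rw [hrA] at hnn ⊢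
      nlinarith [hcompA, hcMpos]
    rw [hxeq]
    linarith [hcon]

end S10

/-- lower bound in Theorem 3. `V*(M) ≥ LB(M)`, where
`V*(M)` is the minimum of the optimization problem in Theorem 2 and `LB(M)`
is the minimum of `2B(μ,q)` over `q` with
`D(q‖π) ≤ (2B(μ,π) + C_π)/(M-1)`, `C_π = -log min_y π(y)`. -/
theorem statement10 (𝓨 : Type) [Fintype 𝓨] [Nonempty 𝓨]
    (M : ℕ) (hM : 3 ≤ M)
    (μ π : 𝓨 → ℝ) (hμ : IsProb μ) (hπ : IsProb π)
    (hμf : FullSupport μ) (hπf : FullSupport π) (hne : μ ≠ π) :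
    ∃ V L : ℝ, IsLeast (VstarSet μ π M) V ∧ IsLeast (LBSet μ π M) L ∧
      L ≤ V := by
  obtain ⟨L, hL⟩ := S10.exists_L M hM μ π hμ hπ hμf hπf
  obtain ⟨V, hV⟩ := S10.exists_V M hM μ π hμ hπ hμf hπf
  exact ⟨V, L, hV, hL, S10.main_ineq M hM μ π hμ hπ hμf hπf L hL V hV.1⟩
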